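/- Let n ≥ 3 and let α₁,…,α_n be positive integers. The genus-zero equation 2 + (n−2)·A = Σ_{i=1}^n A_i holds (as an identity of rational numbers) if and only if one of the following three conditions holds: (1) the α_i are pairwise coprime; (2) there is exactly one unordered pair of indices k ≠ l with gcd(α_k,α_l) ≠ 1, and gcd(α_i,α_j) = 1 for every other pair i ≠ j; (3) there are three distinct indices k, l, m with gcd(α_k,α_l) = gcd(α_l,α_m) = gcd(α_k,α_m) = 2 and gcd(α_i,α_j) = 1 for every pair i ≠ j not contained in {k,l,m}. -/

import Mathlib

/-- `A = (∏ i, α i) / lcm(α₁,…,α_n)`, an exact natural-number division since the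
lcm of a finite family of positive integers divides their product. -/
def brA (n : ℕ) (α : Fin n → ℕ) : ℕ :=
  (∏ i, α i) / Finset.univ.lcm α

/-- `A_i = (∏_{j ≠ i} α j) / lcm_{j ≠ i}(α j)`. -/
def brAi (n : ℕ) (α : Fin n → ℕ) (i : Fin n) : ℕ :=
  (∏ j ∈ Finset.univ.erase i, α j) / (Finset.univ.erase i).lcm α

/-- The genus-zero equation `2 + (n − 2)·A = Σ_{i=1}^n A_i` as an identity of
rational numbers. -/
def genusEq (n : ℕ) (α : Fin n → ℕ) : Prop :=
  (2 : ℚ) + ((n : ℚ) - 2) * (brA n α : ℚ) = ∑ i, (brAi n α i : ℚ)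


open Finset

section helpers
variable {ι : Type*} [DecidableEq ι]

lemma brcoprime_lcm_iff (k : ℕ) (s : Finset ι) (f : ι → ℕ) :
    Nat.Coprime k (s.lcm f) ↔ ∀ i ∈ s, Nat.Coprime k (f i) := by
  induction s using Finset.induction_on with
  | empty => simp [Nat.coprime_one_right]
  | insert _ _ h ih =>
    rw [Finset.lcm_insert]
    constructor
    · intro hc j hj
      rcases Finset.mem_insert.mp hj with rfl | hj
      · exact Nat.Coprime.coprime_dvd_right (dvd_lcm_left _ _) hc
      · exact (ih.mp (Nat.Coprime.coprime_dvd_right (dvd_lcm_right _ _) hc)) j hj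
    · intro hc
      exact Nat.Coprime.coprime_dvd_right (Nat.lcm_dvd_mul _ _)
        (Nat.Coprime.mul_right (hc _ (Finset.mem_insert_self _ _))
          (ih.mpr fun j hj => hc j (Finset.mem_insert_of_mem hj)))

lemma brprime_dvd_lcm {p : ℕ} (hp : p.Prime) {s : Finset ι} {f : ι → ℕ}
    (h : p ∣ s.lcm f) : ∃ i ∈ s, p ∣ f i := by
  by_contra hc
  push_neg at hc
  have hcop : Nat.Coprime p (s.lcm f) :=
    (brcoprime_lcm_iff p s f).mpr fun i hi => (Nat.Prime.coprime_iff_not_dvd hp).mpr (hc i hi)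
  exact hp.one_lt.ne' (Nat.Coprime.eq_one_of_dvd hcop h)

lemma brgcd_lcm_congr (a : ℕ) {s t : Finset ι} (hts : t ⊆ s) (f : ι → ℕ)
    (h : ∀ j ∈ s, j ∉ t → Nat.Coprime a (f j)) :
    Nat.gcd a (s.lcm f) = Nat.gcd a (t.lcm f) := by
  have hcop : Nat.Coprime a ((s \ t).lcm f) :=
    (brcoprime_lcm_iff a _ f).mpr fun j hj =>
      h j (Finset.mem_sdiff.mp hj).1 (Finset.mem_sdiff.mp hj).2
  apply Nat.dvd_antisymm
  · have h1 : s.lcm f ∣ t.lcm f * (s \ t).lcm f := by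
      apply Finset.lcm_dvd
      intro b hb
      by_cases hbt : b ∈ t
      · exact (Finset.dvd_lcm hbt).trans (Dvd.intro _ rfl)
      · exact (Finset.dvd_lcm (Finset.mem_sdiff.mpr ⟨hb, hbt⟩)).trans (Dvd.intro_left _ rfl)
    have h2 : Nat.gcd a (s.lcm f) ∣ Nat.gcd a (t.lcm f * (s \ t).lcm f) :=
      Nat.dvd_gcd (Nat.gcd_dvd_left _ _) ((Nat.gcd_dvd_right _ _).trans h1)
    rwa [Nat.Coprime.gcd_mul_right_cancel_right _ hcop.symm] at h2
  · exact Nat.dvd_gcd (Nat.gcd_dvd_left _ _)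
      ((Nat.gcd_dvd_right _ _).trans (Finset.lcm_mono hts))

lemma brlcm_eq_prod (s : Finset ι) (f : ι → ℕ)
    (h : ∀ i ∈ s, ∀ j ∈ s, i ≠ j → Nat.Coprime (f i) (f j)) :
    s.lcm f = ∏ i ∈ s, f i := by
  induction s using Finset.induction_on with
  | empty => simp
  | @insert a s ha ih =>
    rw [Finset.lcm_insert, Finset.prod_insert ha,
      ← ih fun i hi j hj hij =>
        h i (Finset.mem_insert_of_mem hi) j (Finset.mem_insert_of_mem hj) hij]
    have hcop : Nat.Coprime (f a) (s.lcm f) :=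
      (brcoprime_lcm_iff _ s f).mpr fun j hj =>
        h a (Finset.mem_insert_self a s) j (Finset.mem_insert_of_mem hj)
          (fun haj => ha (haj ▸ hj))
    exact hcop.lcm_eq_mul

lemma brlcm_mul_of_coprime {a b c : ℕ} (h : Nat.Coprime a c) :
    Nat.lcm a (b * c) = Nat.lcm a b * c := by
  rcases Nat.eq_zero_or_pos a with rfl | ha
  · simp [Nat.lcm]
  rcases Nat.eq_zero_or_pos b with rfl | hb
  · simp [Nat.lcm]
  rcases Nat.eq_zero_or_pos c with rfl | hc
  · have h1 : a = 1 := Nat.coprime_zero_right a |>.mp h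
    simp [h1, Nat.lcm]
  have hg : Nat.gcd a (b * c) = Nat.gcd a b := Nat.Coprime.gcd_mul_right_cancel_right b h.symm
  have hgpos : 0 < Nat.gcd a b := Nat.gcd_pos_of_pos_left b ha
  apply Nat.eq_of_mul_eq_mul_left hgpos
  calc Nat.gcd a b * Nat.lcm a (b * c) = Nat.gcd a (b * c) * Nat.lcm a (b * c) := by rw [hg]
    _ = a * (b * c) := Nat.gcd_mul_lcm _ _
    _ = (a * b) * c := by ring
    _ = (Nat.gcd a b * Nat.lcm a b) * c := by rw [Nat.gcd_mul_lcm]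
    _ = Nat.gcd a b * (Nat.lcm a b * c) := by ring

lemma brlcm_eq_left {a d : ℕ} (h : d ∣ a) : Nat.lcm a d = a :=
  Nat.dvd_antisymm (Nat.lcm_dvd dvd_rfl h) (Nat.dvd_lcm_left _ _)

lemma brgcd_lcm_distrib (a b c : ℕ) :
    Nat.gcd a (Nat.lcm b c) = Nat.lcm (Nat.gcd a b) (Nat.gcd a c) := by
  rcases Nat.eq_zero_or_pos a with rfl | ha
  · simp
  rcases Nat.eq_zero_or_pos b with rfl | hb
  · rw [Nat.lcm, Nat.zero_mul, Nat.zero_div, Nat.gcd_zero_right]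
    exact (brlcm_eq_left (Nat.gcd_dvd_left a c)).symm
  rcases Nat.eq_zero_or_pos c with rfl | hc
  · rw [Nat.lcm_zero_right, Nat.gcd_zero_right, Nat.lcm_comm]
    exact (brlcm_eq_left (Nat.gcd_dvd_left a b)).symm
  have hl : Nat.lcm b c ≠ 0 := Nat.lcm_ne_zero hb.ne' hc.ne'
  have hab : Nat.gcd a b ≠ 0 := (Nat.gcd_pos_of_pos_left b ha).ne'
  have hac : Nat.gcd a c ≠ 0 := (Nat.gcd_pos_of_pos_left c ha).ne'
  have h1 : Nat.gcd a (Nat.lcm b c) ≠ 0 := (Nat.gcd_pos_of_pos_left _ ha).ne'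
  have h2 : Nat.lcm (Nat.gcd a b) (Nat.gcd a c) ≠ 0 := Nat.lcm_ne_zero hab hac
  apply Nat.eq_of_factorization_eq h1 h2
  intro p
  rw [Nat.factorization_gcd ha.ne' hl, Nat.factorization_lcm hb.ne' hc.ne',
    Nat.factorization_lcm hab hac, Nat.factorization_gcd ha.ne' hb.ne',
    Nat.factorization_gcd ha.ne' hc.ne']
  simp only [Finsupp.inf_apply, Finsupp.sup_apply]
  exact min_max_distrib_left _ _ _

lemma brprod_eq_gcd_mul_lcm (s : Finset ι) (f : ι → ℕ) {l m : ι}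
    (hl : l ∈ s) (hm : m ∈ s) (hlm : l ≠ m)
    (h : ∀ i ∈ s, ∀ j ∈ s, i ≠ j → ¬(i = l ∧ j = m) → ¬(i = m ∧ j = l) →
      Nat.Coprime (f i) (f j)) :
    ∏ i ∈ s, f i = Nat.gcd (f l) (f m) * s.lcm f := by
  set t := (s.erase l).erase m with ht
  have hm' : m ∈ s.erase l := Finset.mem_erase.mpr ⟨fun hh => hlm hh.symm, hm⟩
  have hmem : ∀ i ∈ t, i ∈ s ∧ i ≠ l ∧ i ≠ m := by
    intro i hi
    have h1 := Finset.mem_erase.mp hi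
    have h2 := Finset.mem_erase.mp h1.2
    exact ⟨h2.2, h2.1, h1.1⟩
  have hs : insert l (insert m t) = s := by
    rw [ht, Finset.insert_erase hm', Finset.insert_erase hl]
  have hmt : m ∉ t := Finset.notMem_erase _ _
  have hlt : l ∉ insert m t := by
    intro hh
    rcases Finset.mem_insert.mp hh with h1 | h1
    · exact hlm h1
    · exact (hmem l h1).2.1 rfl
  have htc : t.lcm f = ∏ i ∈ t, f i := by
    apply brlcm_eq_prod
    intro i hi j hj hij
    exact h i (hmem i hi).1 j (hmem j hj).1 hij
      (fun hh => (hmem i hi).2.1 hh.1) (fun hh => (hmem i hi).2.2 hh.1)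
  have hc2 : Nat.Coprime (f m) (∏ i ∈ t, f i) :=
    Nat.Coprime.prod_right fun i hi =>
      h m hm i (hmem i hi).1 (fun hh => (hmem i hi).2.2 hh.symm)
        (fun hh => hlm hh.1.symm) (fun hh => (hmem i hi).2.1 hh.2)
  have hc3 : Nat.Coprime (f l) (∏ i ∈ t, f i) :=
    Nat.Coprime.prod_right fun i hi =>
      h l hl i (hmem i hi).1 (fun hh => (hmem i hi).2.1 hh.symm)
        (fun hh => (hmem i hi).2.2 hh.2) (fun hh => hlm hh.1)
  have hlcm : s.lcm f = Nat.lcm (f l) (f m) * ∏ i ∈ t, f i := by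
    rw [← hs, Finset.lcm_insert, Finset.lcm_insert]
    show Nat.lcm (f l) (Nat.lcm (f m) (t.lcm f)) = _
    rw [htc, hc2.lcm_eq_mul, brlcm_mul_of_coprime hc3]
  rw [← hs, Finset.prod_insert hlt, Finset.prod_insert hmt, hs, hlcm]
  have hgl := Nat.gcd_mul_lcm (f l) (f m)
  calc f l * (f m * ∏ i ∈ t, f i) = (f l * f m) * ∏ i ∈ t, f i := by ring
    _ = (Nat.gcd (f l) (f m) * Nat.lcm (f l) (f m)) * ∏ i ∈ t, f i := by rw [hgl]
    _ = Nat.gcd (f l) (f m) * (Nat.lcm (f l) (f m) * ∏ i ∈ t, f i) := by ring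

end helpers

lemma brdvd_two {x : ℕ} (h : x ∣ 2) : x = 1 ∨ x = 2 := by
  rcases Nat.eq_zero_or_pos x with rfl | hx
  · simp at h
  · have := Nat.le_of_dvd (by norm_num) h
    interval_cases x
    · left; rfl
    · right; rfl

lemma brcore2 {x y z : ℕ} (h1 : Nat.lcm x z = 2) (h2 : Nat.lcm x y = 2)
    (h3 : 2 ≤ Nat.lcm y z)
    (g1 : Nat.gcd y z ∣ x) (g2 : Nat.gcd x z ∣ y) (g3 : Nat.gcd x y ∣ z) :
    x = 2 ∧ y = 2 ∧ z = 2 := by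
  have hx : x ∣ 2 := h1 ▸ Nat.dvd_lcm_left x z
  have hz : z ∣ 2 := h1 ▸ Nat.dvd_lcm_right x z
  have hy : y ∣ 2 := h2 ▸ Nat.dvd_lcm_right x y
  rcases brdvd_two hx with rfl | rfl <;> rcases brdvd_two hy with rfl | rfl <;>
    rcases brdvd_two hz with rfl | rfl <;>
    revert h1 h2 h3 g1 g2 g3 <;> decide

lemma brkey_core {x y z A : ℕ} (hA : 0 < A)
    (h3 : 2 ≤ Nat.lcm y z)
    (g1 : Nat.gcd y z ∣ x) (g2 : Nat.gcd x z ∣ y) (g3 : Nat.gcd x y ∣ z)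
    (heq : (1:ℚ)/(Nat.lcm x z : ℕ) + 1/(Nat.lcm x y : ℕ) + 1/(Nat.lcm y z : ℕ) = 1 + 2/A)
    (hxz : Nat.lcm x z = 2) (h2 : 2 ≤ Nat.lcm x y) :
    x = 2 ∧ y = 2 ∧ z = 2 := by
  have hA2 : (0:ℚ) < 2/A := by positivity
  have hcases : Nat.lcm x y = 2 ∨ Nat.lcm y z = 2 ∨ Nat.lcm x y = 3 ∨ Nat.lcm y z = 3 ∨
      (4 ≤ Nat.lcm x y ∧ 4 ≤ Nat.lcm y z) := by omega
  rcases hcases with hc | hc | hc | hc | ⟨hc1, hc2⟩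
  · exact brcore2 hxz hc h3 g1 g2 g3
  · have h := brcore2 (by rw [Nat.lcm_comm]; exact hxz) (by rw [Nat.lcm_comm]; exact hc)
      (by rw [Nat.lcm_comm]; exact h2)
      (by rw [Nat.gcd_comm]; exact g3) (by rw [Nat.gcd_comm]; exact g2)
      (by rw [Nat.gcd_comm]; exact g1)
    exact ⟨h.2.2, h.2.1, h.1⟩
  · -- lcm x y = 3
    have hx3 : x ∣ 3 := hc ▸ Nat.dvd_lcm_left x y
    have hx2 : x ∣ 2 := hxz ▸ Nat.dvd_lcm_left x z
    have hx1 : x = 1 := by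
      rcases brdvd_two hx2 with rfl | rfl
      · rfl
      · norm_num at hx3
    subst hx1
    have hz2 : z = 2 := by rwa [Nat.lcm_one_left] at hxz
    have hy3 : y = 3 := by rwa [Nat.lcm_one_left] at hc
    subst hz2; subst hy3
    rw [hxz, hc, (by decide : Nat.lcm 3 2 = 6)] at heq
    norm_num at heq
    linarith
  · -- lcm y z = 3
    have hz3 : z ∣ 3 := hc ▸ Nat.dvd_lcm_right y z
    have hz2 : z ∣ 2 := hxz ▸ Nat.dvd_lcm_right x z
    have hz1 : z = 1 := by
      rcases brdvd_two hz2 with rfl | rfl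
      · rfl
      · norm_num at hz3
    subst hz1
    have hx2 : x = 2 := by rwa [Nat.lcm_one_right] at hxz
    have hy3 : y = 3 := by rwa [Nat.lcm_one_right] at hc
    subst hx2; subst hy3
    rw [hxz, hc, (by decide : Nat.lcm 2 3 = 6)] at heq
    norm_num at heq
    linarith
  · exfalso
    have e1 : (1:ℚ)/(Nat.lcm x z : ℕ) = 1/2 := by rw [hxz]; norm_num
    have e2 : (1:ℚ)/(Nat.lcm x y : ℕ) ≤ 1/4 := by
      apply div_le_div_of_nonneg_left (by norm_num) (by norm_num)
      exact_mod_cast hc1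
    have e3 : (1:ℚ)/(Nat.lcm y z : ℕ) ≤ 1/4 := by
      apply div_le_div_of_nonneg_left (by norm_num) (by norm_num)
      exact_mod_cast hc2
    linarith

lemma brkey {x y z A : ℕ} (hA : 0 < A)
    (h1 : 2 ≤ Nat.lcm x z) (h2 : 2 ≤ Nat.lcm x y) (h3 : 2 ≤ Nat.lcm y z)
    (g1 : Nat.gcd y z ∣ x) (g2 : Nat.gcd x z ∣ y) (g3 : Nat.gcd x y ∣ z)
    (heq : (1:ℚ)/(Nat.lcm x z : ℕ) + 1/(Nat.lcm x y : ℕ) + 1/(Nat.lcm y z : ℕ) = 1 + 2/A) :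
    x = 2 ∧ y = 2 ∧ z = 2 := by
  have hA2 : (0:ℚ) < 2/A := by positivity
  have some2 : Nat.lcm x z = 2 ∨ Nat.lcm x y = 2 ∨ Nat.lcm y z = 2 := by
    by_contra hcon
    push_neg at hcon
    obtain ⟨c1, c2, c3⟩ := hcon
    have e1 : (1:ℚ)/(Nat.lcm x z : ℕ) ≤ 1/3 := by
      apply div_le_div_of_nonneg_left (by norm_num) (by norm_num)
      exact_mod_cast (by omega : 3 ≤ Nat.lcm x z)
    have e2 : (1:ℚ)/(Nat.lcm x y : ℕ) ≤ 1/3 := by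
      apply div_le_div_of_nonneg_left (by norm_num) (by norm_num)
      exact_mod_cast (by omega : 3 ≤ Nat.lcm x y)
    have e3 : (1:ℚ)/(Nat.lcm y z : ℕ) ≤ 1/3 := by
      apply div_le_div_of_nonneg_left (by norm_num) (by norm_num)
      exact_mod_cast (by omega : 3 ≤ Nat.lcm y z)
    linarith
  rcases some2 with hc | hc | hc
  · exact brkey_core hA h3 g1 g2 g3 heq hc h2
  · have h := brkey_core hA (by rw [Nat.lcm_comm]; exact h3)
      (by rw [Nat.gcd_comm]; exact g1) g3 g2
      (by rw [Nat.lcm_comm z y]; linarith [heq]) hc h1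
    exact ⟨h.1, h.2.2, h.2.1⟩
  · have h := brkey_core hA h1 g2 g1 (by rw [Nat.gcd_comm]; exact g3)
      (by rw [Nat.lcm_comm y x]; linarith [heq]) hc
      (by rw [Nat.lcm_comm]; exact h2)
    exact ⟨h.2.1, h.1, h.2.2⟩

/-- `gcd(α i, lcm_{j ≠ i} α j)`, the quotient `A / A_i`. -/
def brG (n : ℕ) (α : Fin n → ℕ) (i : Fin n) : ℕ :=
  Nat.gcd (α i) ((Finset.univ.erase i).lcm α)

section main
open Finset

variable {n : ℕ} {α : Fin n → ℕ}

lemma brlcm_ne_zero (hα : ∀ i, 0 < α i) (s : Finset (Fin n)) : s.lcm α ≠ 0 := by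
  intro h
  rw [Finset.lcm_eq_zero_iff] at h
  obtain ⟨i, hi, h0⟩ := h
  exact (hα i).ne' h0

lemma brprod_pos (hα : ∀ i, 0 < α i) (s : Finset (Fin n)) : 0 < ∏ i ∈ s, α i :=
  Finset.prod_pos fun i _ => hα i

/-- The fundamental splitting `A = gcd(α i, L i) * A_i`. -/
lemma brA_fact (hα : ∀ i, 0 < α i) (i : Fin n) :
    brA n α = brG n α i * brAi n α i := by
  rw [brG]
  set L := (Finset.univ.erase i).lcm α with hL
  set P := ∏ j ∈ Finset.univ.erase i, α j with hP
  have hLpos : 0 < L := Nat.pos_of_ne_zero (brlcm_ne_zero hα _)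
  have hLP : L ∣ P := Finset.lcm_dvd fun b hb => Finset.dvd_prod_of_mem α hb
  obtain ⟨c, hc⟩ := hLP
  have hAi : brAi n α i = c := by
    rw [brAi, ← hP, ← hL, hc, Nat.mul_div_cancel_left c hLpos]
  have hprod : ∏ j, α j = α i * P := (Finset.mul_prod_erase univ α (mem_univ i)).symm
  have hlcm : Finset.univ.lcm α = Nat.lcm (α i) L := by
    conv_lhs => rw [← Finset.insert_erase (mem_univ i)]
    rw [Finset.lcm_insert]
    rfl
  have hlcmpos : 0 < Nat.lcm (α i) L := Nat.pos_of_ne_zero (Nat.lcm_ne_zero (hα i).ne' hLpos.ne')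
  have hkey : α i * (L * c) = Nat.lcm (α i) L * (Nat.gcd (α i) L * c) := by
    have hgl := Nat.gcd_mul_lcm (α i) L
    calc α i * (L * c) = (α i * L) * c := by ring
      _ = (Nat.gcd (α i) L * Nat.lcm (α i) L) * c := by rw [hgl]
      _ = Nat.lcm (α i) L * (Nat.gcd (α i) L * c) := by ring
  rw [brA, hprod, hlcm, hAi, hc, hkey, Nat.mul_div_cancel_left _ hlcmpos]

lemma brAi_pos (hα : ∀ i, 0 < α i) (i : Fin n) : 0 < brAi n α i := by
  rw [brAi]
  apply Nat.div_pos (Nat.le_of_dvd (brprod_pos hα _) ?_) (Nat.pos_of_ne_zero (brlcm_ne_zero hα _))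
  exact Finset.lcm_dvd fun b hb => Finset.dvd_prod_of_mem α hb

lemma brA_pos (hα : ∀ i, 0 < α i) : 0 < brA n α := by
  rw [brA]
  apply Nat.div_pos (Nat.le_of_dvd (brprod_pos hα _) ?_) (Nat.pos_of_ne_zero (brlcm_ne_zero hα _))
  exact Finset.lcm_dvd fun b hb => Finset.dvd_prod_of_mem α hb

/-- Reformulation of the genus-zero equation. -/
lemma brgenus_iff (hα : ∀ i, 0 < α i) :
    genusEq n α ↔
      ∑ i, (1:ℚ)/(brG n α i) = (n:ℚ) - 2 + 2/(brA n α) := by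
  simp only [brG]
  have hApos := brA_pos hα
  have hAq : (0:ℚ) < (brA n α : ℚ) := by exact_mod_cast hApos
  have hsum : ∑ i, (brAi n α i : ℚ) =
      (brA n α : ℚ) * ∑ i, (1:ℚ)/(Nat.gcd (α i) ((Finset.univ.erase i).lcm α)) := by
    rw [Finset.mul_sum]
    apply Finset.sum_congr rfl
    intro i _
    have hgq : (0:ℚ) < (Nat.gcd (α i) ((Finset.univ.erase i).lcm α) : ℚ) := by
      exact_mod_cast Nat.gcd_pos_of_pos_left _ (hα i)
    have : brA n α = Nat.gcd (α i) ((Finset.univ.erase i).lcm α) * brAi n α i := by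
      rw [← brG]; exact brA_fact hα i
    have hcast : (brA n α : ℚ) =
        (Nat.gcd (α i) ((Finset.univ.erase i).lcm α) : ℚ) * (brAi n α i : ℚ) := by
      exact_mod_cast congrArg (Nat.cast : ℕ → ℚ) this
    field_simp [hcast]
    rw [hcast]; ring
  rw [genusEq, hsum]
  constructor
  · intro h
    have h2 : ((2:ℚ) + ((n:ℚ) - 2) * (brA n α : ℚ))/(brA n α : ℚ) =
        ∑ i, (1:ℚ)/(Nat.gcd (α i) ((Finset.univ.erase i).lcm α)) := by
      rw [h]; field_simp
    rw [← h2]; field_simp; try ring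
  · intro h
    rw [h]; field_simp; ring

lemma brsum_split (S : Finset (Fin n)) (f : Fin n → ℚ) (h : ∀ i ∉ S, f i = 1) :
    ∑ i, f i = (∑ i ∈ S, f i) + ((n:ℚ) - (S.card : ℚ)) := by
  rw [← Finset.sum_sdiff (Finset.subset_univ S)]
  have h1 : ∑ i ∈ Finset.univ \ S, f i = ((Finset.univ \ S).card : ℚ) := by
    rw [Finset.sum_congr rfl fun i hi => h i (Finset.mem_sdiff.mp hi).2]
    simp
  rw [h1, Finset.card_sdiff_of_subset (Finset.subset_univ S), Finset.card_univ, Fintype.card_fin]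
  have hle : S.card ≤ n := by
    simpa using Finset.card_le_card (Finset.subset_univ S)
  push_cast [Nat.cast_sub hle]
  ring

lemma brlcm_single (l : Fin n) : ({l} : Finset (Fin n)).lcm α = α l := by
  rw [Finset.lcm_singleton]
  exact normalize_eq _

lemma brlcm_pair (l m : Fin n) :
    ({l, m} : Finset (Fin n)).lcm α = Nat.lcm (α l) (α m) := by
  rw [Finset.lcm_insert, brlcm_single]
  rfl

lemma brG_eq_one_cop {i : Fin n} (h : brG n α i = 1) :
    ∀ j, j ≠ i → Nat.gcd (α i) (α j) = 1 := by
  intro j hj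
  have hc : Nat.Coprime (α i) ((Finset.univ.erase i).lcm α) := h
  exact (brcoprime_lcm_iff _ _ _).mp hc j (Finset.mem_erase.mpr ⟨hj, Finset.mem_univ j⟩)

lemma brG_eq_one_of {i : Fin n} (h : ∀ j, j ≠ i → Nat.gcd (α i) (α j) = 1) :
    brG n α i = 1 :=
  (brcoprime_lcm_iff _ _ _).mpr fun j hj => h j (Finset.mem_erase.mp hj).1

lemma brG_exists {i : Fin n} (h : brG n α i ≠ 1) :
    ∃ j, j ≠ i ∧ Nat.gcd (α i) (α j) ≠ 1 := by
  obtain ⟨p, hp, hpdvd⟩ := Nat.exists_prime_and_dvd h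
  have hpL : p ∣ (Finset.univ.erase i).lcm α := hpdvd.trans (Nat.gcd_dvd_right _ _)
  obtain ⟨j, hj, hpj⟩ := brprime_dvd_lcm hp hpL
  refine ⟨j, (Finset.mem_erase.mp hj).1, ?_⟩
  intro hgcd
  have hpg : p ∣ Nat.gcd (α i) (α j) :=
    Nat.dvd_gcd (hpdvd.trans (Nat.gcd_dvd_left _ _)) hpj
  rw [hgcd] at hpg
  exact hp.one_lt.ne' (Nat.dvd_one.mp hpg)

lemma brG_congr (i : Fin n) (t : Finset (Fin n)) (hts : t ⊆ Finset.univ.erase i)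
    (h : ∀ j, j ≠ i → j ∉ t → Nat.gcd (α i) (α j) = 1) :
    brG n α i = Nat.gcd (α i) (t.lcm α) := by
  rw [brG]
  exact brgcd_lcm_congr (α i) hts α fun j hj hjt => h j (Finset.mem_erase.mp hj).1 hjt

lemma brAi_eq_one (hα : ∀ i, 0 < α i) {k : Fin n}
    (h : ∀ i ∈ Finset.univ.erase k, ∀ j ∈ Finset.univ.erase k, i ≠ j →
      Nat.gcd (α i) (α j) = 1) :
    brAi n α k = 1 := by
  rw [brAi, ← brlcm_eq_prod _ _ h, Nat.div_self]
  exact Nat.pos_of_ne_zero (brlcm_ne_zero hα _)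

lemma brAi_eq_gcd (hα : ∀ i, 0 < α i) {k l m : Fin n}
    (hl : l ∈ Finset.univ.erase k) (hm : m ∈ Finset.univ.erase k) (hlm : l ≠ m)
    (h : ∀ i ∈ Finset.univ.erase k, ∀ j ∈ Finset.univ.erase k, i ≠ j →
      ¬(i = l ∧ j = m) → ¬(i = m ∧ j = l) → Nat.gcd (α i) (α j) = 1) :
    brAi n α k = Nat.gcd (α l) (α m) := by
  rw [brAi, brprod_eq_gcd_mul_lcm _ α hl hm hlm h, Nat.mul_div_cancel]
  exact Nat.pos_of_ne_zero (brlcm_ne_zero hα _)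

end main

theorem genus_zero_iff (n : ℕ) (hn : 3 ≤ n) (α : Fin n → ℕ) (hα : ∀ i, 0 < α i) :
    genusEq n α ↔
      ((∀ i j : Fin n, i ≠ j → Nat.gcd (α i) (α j) = 1) ∨
       (∃ k l : Fin n, k ≠ l ∧ Nat.gcd (α k) (α l) ≠ 1 ∧
         ∀ i j : Fin n, i ≠ j → ({i, j} : Finset (Fin n)) ≠ {k, l} →
           Nat.gcd (α i) (α j) = 1) ∨
       (∃ k l m : Fin n, k ≠ l ∧ l ≠ m ∧ k ≠ m ∧
         Nat.gcd (α k) (α l) = 2 ∧ Nat.gcd (α l) (α m) = 2 ∧ Nat.gcd (α k) (α m) = 2 ∧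
         ∀ i j : Fin n, i ≠ j → ¬({i, j} : Finset (Fin n)) ⊆ {k, l, m} →
           Nat.gcd (α i) (α j) = 1)) := by
  classical
  rw [brgenus_iff hα]
  have hA := brA_pos hα
  have hAq : (0:ℚ) < (brA n α : ℚ) := by exact_mod_cast hA
  have hGpos : ∀ i, 0 < brG n α i := fun i => Nat.gcd_pos_of_pos_left _ (hα i)
  constructor
  · intro hEqn
    set T := Finset.univ.filter (fun i => brG n α i ≠ 1) with hT
    have hnotT : ∀ i, i ∉ T → brG n α i = 1 := by
      intro i hi
      by_contra h
      exact hi (Finset.mem_filter.mpr ⟨Finset.mem_univ i, h⟩)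
    have hinT : ∀ i, brG n α i ≠ 1 → i ∈ T := fun i h =>
      Finset.mem_filter.mpr ⟨Finset.mem_univ i, h⟩
    have hTmem : ∀ i ∈ T, brG n α i ≠ 1 := fun i hi => (Finset.mem_filter.mp hi).2
    have hbadT : ∀ i j : Fin n, i ≠ j → Nat.gcd (α i) (α j) ≠ 1 → i ∈ T ∧ j ∈ T := by
      intro i j hij hg
      constructor
      · exact hinT i fun h1 => hg (brG_eq_one_cop h1 j hij.symm)
      · refine hinT j fun h1 => hg ?_
        rw [Nat.gcd_comm]
        exact brG_eq_one_cop h1 i hij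
    have hsplit := brsum_split T (fun i => 1/(brG n α i : ℚ))
      (by intro i hi; show (1:ℚ)/(brG n α i) = 1; rw [hnotT i hi]; norm_num)
    have hTsum : ∑ i ∈ T, (1:ℚ)/(brG n α i) = (T.card : ℚ) - 2 + 2/(brA n α) := by
      rw [hsplit] at hEqn; linarith
    have hApos2 : (0:ℚ) < 2/(brA n α : ℚ) := by positivity
    have hhalf : ∀ i ∈ T, (1:ℚ)/(brG n α i) ≤ 1/2 := by
      intro i hi
      have h2 : 2 ≤ brG n α i := by have := hGpos i; have := hTmem i hi; omega
      have h2q : (2:ℚ) ≤ (brG n α i : ℚ) := by exact_mod_cast h2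
      rw [div_le_div_iff₀ (by linarith) (by norm_num)]
      linarith
    have hsumle : ∑ i ∈ T, (1:ℚ)/(brG n α i) ≤ (T.card : ℚ) * (1/2) := by
      calc ∑ i ∈ T, (1:ℚ)/(brG n α i) ≤ T.card • ((1:ℚ)/2) :=
            Finset.sum_le_card_nsmul T _ _ hhalf
        _ = (T.card : ℚ) * (1/2) := by rw [nsmul_eq_mul]
    have hcard3 : T.card ≤ 3 := by
      have h4 : (T.card : ℚ) < 4 := by rw [hTsum] at hsumle; linarith
      have h4' : T.card < 4 := by exact_mod_cast h4
      omega
    have hcard1 : T.card ≠ 1 := by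
      intro h1
      obtain ⟨i, hi⟩ := Finset.card_eq_one.mp h1
      have hiT : i ∈ T := by rw [hi]; exact Finset.mem_singleton_self i
      have hGi : 2 ≤ brG n α i := by have := hGpos i; have := hTmem i hiT; omega
      have hdvd : brG n α i ∣ brA n α := ⟨brAi n α i, brA_fact hα i⟩
      have hA2 : 2 ≤ brA n α := le_trans hGi (Nat.le_of_dvd hA hdvd)
      have hA2q : (2:ℚ) ≤ (brA n α : ℚ) := by exact_mod_cast hA2
      have h2A : 2/(brA n α : ℚ) ≤ 1 := by rw [div_le_one hAq]; linarith
      have hsum_pos : 0 < ∑ j ∈ T, (1:ℚ)/(brG n α j) := by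
        rw [hi, Finset.sum_singleton]
        positivity
      rw [hTsum, h1] at hsum_pos
      norm_num at hsum_pos
      linarith
    have hcases : T.card = 0 ∨ T.card = 2 ∨ T.card = 3 := by omega
    rcases hcases with h0 | h2 | h3
    · left
      intro i j hij
      have hiT : i ∉ T := by rw [Finset.card_eq_zero.mp h0]; exact Finset.notMem_empty i
      exact brG_eq_one_cop (hnotT i hiT) j hij.symm
    · right; left
      obtain ⟨k, l, hkl, hTkl⟩ := Finset.card_eq_two.mp h2
      refine ⟨k, l, hkl, ?_, ?_⟩
      · have hk : k ∈ T := by rw [hTkl]; simp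
        obtain ⟨j, hjk, hj⟩ := brG_exists (hTmem k hk)
        have hjT : j ∈ T := (hbadT k j hjk.symm hj).2
        have hjkl : j = k ∨ j = l := by rw [hTkl] at hjT; simpa using hjT
        rcases hjkl with rfl | rfl
        · exact absurd rfl hjk
        · exact hj
      · intro i j hij hne
        by_contra hg
        have hij2 := hbadT i j hij hg
        have hi : i = k ∨ i = l := by have := hij2.1; rw [hTkl] at this; simpa using this
        have hj : j = k ∨ j = l := by have := hij2.2; rw [hTkl] at this; simpa using this
        rcases hi with rfl | rfl <;> rcases hj with rfl | rfl
        · exact hij rfl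
        · exact hne rfl
        · exact hne (Finset.pair_comm i j)
        · exact hij rfl
    · right; right
      obtain ⟨k, l, m, hkl, hkm, hlm, hTklm⟩ := Finset.card_eq_three.mp h3
      set x := Nat.gcd (α k) (α l) with hxdef
      set y := Nat.gcd (α l) (α m) with hydef
      set z := Nat.gcd (α k) (α m) with hzdef
      have hmemT : ∀ i, i ∈ T ↔ (i = k ∨ i = l ∨ i = m) := by
        intro i; rw [hTklm]; simp
      have hcopout : ∀ i j : Fin n, i ≠ j → i ∉ T → Nat.gcd (α i) (α j) = 1 :=
        fun i j hij hi => brG_eq_one_cop (hnotT i hi) j hij.symm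
      have hcopout' : ∀ i j : Fin n, i ≠ j → j ∉ T → Nat.gcd (α i) (α j) = 1 := by
        intro i j hij hj
        rw [Nat.gcd_comm]
        exact hcopout j i hij.symm hj
      have hGk : brG n α k = Nat.lcm x z := by
        rw [brG_congr k {l, m} ?_ ?_, brlcm_pair, brgcd_lcm_distrib]
        · intro e he
          simp only [Finset.mem_insert, Finset.mem_singleton] at he
          rcases he with rfl | rfl
          · exact Finset.mem_erase.mpr ⟨hkl.symm, Finset.mem_univ _⟩
          · exact Finset.mem_erase.mpr ⟨hkm.symm, Finset.mem_univ _⟩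
        · intro j hj hjt
          simp only [Finset.mem_insert, Finset.mem_singleton, not_or] at hjt
          refine hcopout' k j (fun h => hj h.symm) ?_
          intro hjT
          rcases (hmemT j).mp hjT with rfl | rfl | rfl
          · exact hj rfl
          · exact hjt.1 rfl
          · exact hjt.2 rfl
      have hGl : brG n α l = Nat.lcm x y := by
        rw [brG_congr l {k, m} ?_ ?_, brlcm_pair, brgcd_lcm_distrib,
          Nat.gcd_comm (α l) (α k)]
        · intro e he
          simp only [Finset.mem_insert, Finset.mem_singleton] at he
          rcases he with rfl | rfl
          · exact Finset.mem_erase.mpr ⟨hkl, Finset.mem_univ _⟩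
          · exact Finset.mem_erase.mpr ⟨hlm.symm, Finset.mem_univ _⟩
        · intro j hj hjt
          simp only [Finset.mem_insert, Finset.mem_singleton, not_or] at hjt
          refine hcopout' l j (fun h => hj h.symm) ?_
          intro hjT
          rcases (hmemT j).mp hjT with rfl | rfl | rfl
          · exact hjt.1 rfl
          · exact hj rfl
          · exact hjt.2 rfl
      have hGm : brG n α m = Nat.lcm z y := by
        rw [brG_congr m {k, l} ?_ ?_, brlcm_pair, brgcd_lcm_distrib,
          Nat.gcd_comm (α m) (α k), Nat.gcd_comm (α m) (α l)]
        · intro e he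
          simp only [Finset.mem_insert, Finset.mem_singleton] at he
          rcases he with rfl | rfl
          · exact Finset.mem_erase.mpr ⟨hkm, Finset.mem_univ _⟩
          · exact Finset.mem_erase.mpr ⟨hlm, Finset.mem_univ _⟩
        · intro j hj hjt
          simp only [Finset.mem_insert, Finset.mem_singleton, not_or] at hjt
          refine hcopout' m j (fun h => hj h.symm) ?_
          intro hjT
          rcases (hmemT j).mp hjT with rfl | rfl | rfl
          · exact hjt.1 rfl
          · exact hjt.2 rfl
          · exact hj rfl
      have hkT : k ∈ T := (hmemT k).mpr (Or.inl rfl)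
      have hlT : l ∈ T := (hmemT l).mpr (Or.inr (Or.inl rfl))
      have hmT : m ∈ T := (hmemT m).mpr (Or.inr (Or.inr rfl))
      have hbk : 2 ≤ Nat.lcm x z := by
        rw [← hGk]; have := hGpos k; have := hTmem k hkT; omega
      have hbl : 2 ≤ Nat.lcm x y := by
        rw [← hGl]; have := hGpos l; have := hTmem l hlT; omega
      have hbm : 2 ≤ Nat.lcm y z := by
        rw [Nat.lcm_comm, ← hGm]; have := hGpos m; have := hTmem m hmT; omega
      have hsum3 : ∑ i ∈ T, (1:ℚ)/(brG n α i) =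
          1/(brG n α k) + 1/(brG n α l) + 1/(brG n α m) := by
        rw [hTklm, Finset.sum_insert (by simp [hkl, hkm]),
          Finset.sum_insert (by simp [hlm]), Finset.sum_singleton]
        ring
      have heq : (1:ℚ)/(Nat.lcm x z : ℕ) + 1/(Nat.lcm x y : ℕ) + 1/(Nat.lcm y z : ℕ) =
          1 + 2/(brA n α) := by
        rw [Nat.lcm_comm y z, ← hGk, ← hGl, ← hGm]
        rw [hsum3, h3] at hTsum
        push_cast at hTsum ⊢
        linarith
      have g1 : Nat.gcd y z ∣ x :=
        Nat.dvd_gcd ((Nat.gcd_dvd_right y z).trans (Nat.gcd_dvd_left (α k) (α m)))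
          ((Nat.gcd_dvd_left y z).trans (Nat.gcd_dvd_left (α l) (α m)))
      have g2 : Nat.gcd x z ∣ y :=
        Nat.dvd_gcd ((Nat.gcd_dvd_left x z).trans (Nat.gcd_dvd_right (α k) (α l)))
          ((Nat.gcd_dvd_right x z).trans (Nat.gcd_dvd_right (α k) (α m)))
      have g3 : Nat.gcd x y ∣ z :=
        Nat.dvd_gcd ((Nat.gcd_dvd_left x y).trans (Nat.gcd_dvd_left (α k) (α l)))
          ((Nat.gcd_dvd_right x y).trans (Nat.gcd_dvd_right (α l) (α m)))
      obtain ⟨hx2, hy2, hz2⟩ := brkey hA hbk hbl hbm g1 g2 g3 heq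
      refine ⟨k, l, m, hkl, hlm, hkm, hx2, hy2, hz2, ?_⟩
      intro i j hij hsub
      by_contra hg
      have hij2 := hbadT i j hij hg
      apply hsub
      rw [Finset.insert_subset_iff, Finset.singleton_subset_iff]
      constructor
      · rcases (hmemT i).mp hij2.1 with rfl | rfl | rfl <;> simp
      · rcases (hmemT j).mp hij2.2 with rfl | rfl | rfl <;> simp
  · intro hcond
    rcases hcond with h1 | ⟨k, l, hkl, hgkl, hothers⟩ | ⟨k, l, m, hkl, hlm, hkm, hxkl, hylm, hzkm, hothers⟩
    · -- all pairwise coprime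
      have hG1 : ∀ i, brG n α i = 1 := fun i =>
        brG_eq_one_of fun j hj => h1 i j hj.symm
      have hA1 : brA n α = 1 := by
        rw [brA, ← brlcm_eq_prod Finset.univ α (fun i _ j _ hij => h1 i j hij),
          Nat.div_self]
        exact Nat.pos_of_ne_zero (brlcm_ne_zero hα _)
      simp only [hG1, hA1]
      rw [Finset.sum_const, Finset.card_univ, Fintype.card_fin]
      push_cast
      norm_num
    · -- one bad pair
      have hpairne : ∀ i j : Fin n, i ∉ ({k, l} : Finset (Fin n)) →
          ({i, j} : Finset (Fin n)) ≠ {k, l} := by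
        intro i j hi hEq
        exact hi (hEq ▸ Finset.mem_insert_self i {j})
      have hGk : brG n α k = Nat.gcd (α k) (α l) := by
        rw [brG_congr k {l} ?_ ?_, brlcm_single]
        · exact Finset.singleton_subset_iff.mpr
            (Finset.mem_erase.mpr ⟨hkl.symm, Finset.mem_univ _⟩)
        · intro j hj hjt
          simp only [Finset.mem_singleton] at hjt
          refine hothers k j (fun h => hj h.symm) ?_
          intro hEq
          have hlm : l ∈ ({k, j} : Finset (Fin n)) := hEq ▸ by simp
          simp only [Finset.mem_insert, Finset.mem_singleton] at hlm
          rcases hlm with h | h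
          · exact hkl h.symm
          · exact hjt h.symm
      have hGl : brG n α l = Nat.gcd (α k) (α l) := by
        rw [brG_congr l {k} ?_ ?_, brlcm_single, Nat.gcd_comm]
        · exact Finset.singleton_subset_iff.mpr
            (Finset.mem_erase.mpr ⟨hkl, Finset.mem_univ _⟩)
        · intro j hj hjt
          simp only [Finset.mem_singleton] at hjt
          refine hothers l j (fun h => hj h.symm) ?_
          intro hEq
          have hkm : k ∈ ({l, j} : Finset (Fin n)) := hEq ▸ by simp
          simp only [Finset.mem_insert, Finset.mem_singleton] at hkm
          rcases hkm with h | h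
          · exact hkl h
          · exact hjt h.symm
      have hGi : ∀ i, i ≠ k → i ≠ l → brG n α i = 1 := by
        intro i hik hil
        apply brG_eq_one_of
        intro j hj
        refine hothers i j hj.symm (hpairne i j ?_)
        simp [hik, hil]
      have hAk : brAi n α k = 1 := by
        apply brAi_eq_one hα
        intro i hi j hj hij
        refine hothers i j hij ?_
        intro hEq
        have : k ∈ ({i, j} : Finset (Fin n)) := hEq ▸ by simp
        simp only [Finset.mem_insert, Finset.mem_singleton] at this
        rcases this with h | h
        · exact (Finset.mem_erase.mp hi).1 h.symm
        · exact (Finset.mem_erase.mp hj).1 h.symm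
      have hAd : brA n α = Nat.gcd (α k) (α l) := by
        rw [brA_fact hα k, hGk, hAk, Nat.mul_one]
      have hd2 : 2 ≤ Nat.gcd (α k) (α l) := by
        have := Nat.gcd_pos_of_pos_left (α l) (hα k)
        omega
      have hdq : (0:ℚ) < (Nat.gcd (α k) (α l) : ℚ) := by
        have := Nat.gcd_pos_of_pos_left (α l) (hα k)
        exact_mod_cast this
      rw [brsum_split {k, l} _ ?_]
      · rw [Finset.sum_insert (by simp [hkl]), Finset.sum_singleton,
          Finset.card_insert_of_notMem (by simp [hkl]), Finset.card_singleton]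
        rw [hGk, hGl, hAd]
        push_cast
        field_simp
        ring
      · intro i hi
        simp only [Finset.mem_insert, Finset.mem_singleton, not_or] at hi
        show (1:ℚ)/(brG n α i) = 1
        rw [hGi i hi.1 hi.2]
        norm_num
    · -- three indices with pairwise gcd 2
      have hnotsub : ∀ i j : Fin n, i ∉ ({k, l, m} : Finset (Fin n)) →
          ¬({i, j} : Finset (Fin n)) ⊆ {k, l, m} := by
        intro i j hi hsub
        exact hi (hsub (Finset.mem_insert_self i {j}))
      have hnotsub' : ∀ i j : Fin n, j ∉ ({k, l, m} : Finset (Fin n)) →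
          ¬({i, j} : Finset (Fin n)) ⊆ {k, l, m} := by
        intro i j hj hsub
        exact hj (hsub (Finset.mem_insert_of_mem (Finset.mem_singleton_self j)))
      have hGk : brG n α k = 2 := by
        rw [brG_congr k {l, m} ?_ ?_, brlcm_pair, brgcd_lcm_distrib, hxkl, hzkm,
          Nat.lcm_self]
        · intro e he
          simp only [Finset.mem_insert, Finset.mem_singleton] at he
          rcases he with rfl | rfl
          · exact Finset.mem_erase.mpr ⟨hkl.symm, Finset.mem_univ _⟩
          · exact Finset.mem_erase.mpr ⟨hkm.symm, Finset.mem_univ _⟩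
        · intro j hj hjt
          simp only [Finset.mem_insert, Finset.mem_singleton, not_or] at hjt
          refine hothers k j (fun h => hj h.symm) (hnotsub' k j ?_)
          simp only [Finset.mem_insert, Finset.mem_singleton, not_or]
          exact ⟨hj, hjt.1, hjt.2⟩
      have hGl : brG n α l = 2 := by
        rw [brG_congr l {k, m} ?_ ?_, brlcm_pair, brgcd_lcm_distrib,
          Nat.gcd_comm (α l) (α k), hxkl, hylm, Nat.lcm_self]
        · intro e he
          simp only [Finset.mem_insert, Finset.mem_singleton] at he
          rcases he with rfl | rfl
          · exact Finset.mem_erase.mpr ⟨hkl, Finset.mem_univ _⟩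
          · exact Finset.mem_erase.mpr ⟨hlm.symm, Finset.mem_univ _⟩
        · intro j hj hjt
          simp only [Finset.mem_insert, Finset.mem_singleton, not_or] at hjt
          refine hothers l j (fun h => hj h.symm) (hnotsub' l j ?_)
          simp only [Finset.mem_insert, Finset.mem_singleton, not_or]
          exact ⟨hjt.1, hj, hjt.2⟩
      have hGm : brG n α m = 2 := by
        rw [brG_congr m {k, l} ?_ ?_, brlcm_pair, brgcd_lcm_distrib,
          Nat.gcd_comm (α m) (α k), Nat.gcd_comm (α m) (α l), hzkm, hylm,
          Nat.lcm_self]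
        · intro e he
          simp only [Finset.mem_insert, Finset.mem_singleton] at he
          rcases he with rfl | rfl
          · exact Finset.mem_erase.mpr ⟨hkm, Finset.mem_univ _⟩
          · exact Finset.mem_erase.mpr ⟨hlm, Finset.mem_univ _⟩
        · intro j hj hjt
          simp only [Finset.mem_insert, Finset.mem_singleton, not_or] at hjt
          refine hothers m j (fun h => hj h.symm) (hnotsub' m j ?_)
          simp only [Finset.mem_insert, Finset.mem_singleton, not_or]
          exact ⟨hjt.1, hjt.2, hj⟩
      have hGi : ∀ i, i ≠ k → i ≠ l → i ≠ m → brG n α i = 1 := by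
        intro i hik hil him
        apply brG_eq_one_of
        intro j hj
        refine hothers i j hj.symm (hnotsub i j ?_)
        simp [hik, hil, him]
      have hAk : brAi n α k = 2 := by
        rw [brAi_eq_gcd hα (l := l) (m := m) ?_ ?_ hlm ?_, hylm]
        · exact Finset.mem_erase.mpr ⟨hkl.symm, Finset.mem_univ _⟩
        · exact Finset.mem_erase.mpr ⟨hkm.symm, Finset.mem_univ _⟩
        · intro i hi j hj hij hilm himl
          have hik := (Finset.mem_erase.mp hi).1
          have hjk := (Finset.mem_erase.mp hj).1
          refine hothers i j hij ?_
          intro hsub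
          have h1 : i = k ∨ i = l ∨ i = m := by
            have := hsub (Finset.mem_insert_self i {j})
            simpa using this
          have h2 : j = k ∨ j = l ∨ j = m := by
            have := hsub (Finset.mem_insert_of_mem (Finset.mem_singleton_self j))
            simpa using this
          rcases h1 with rfl | rfl | rfl
          · exact hik rfl
          · rcases h2 with rfl | rfl | rfl
            · exact hjk rfl
            · exact hij rfl
            · exact hilm ⟨rfl, rfl⟩
          · rcases h2 with rfl | rfl | rfl
            · exact hjk rfl
            · exact himl ⟨rfl, rfl⟩
            · exact hij rfl
      have hA4 : brA n α = 4 := by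
        rw [brA_fact hα k, hGk, hAk]
      rw [brsum_split {k, l, m} _ ?_]
      · rw [Finset.sum_insert (by simp [hkl, hkm]), Finset.sum_insert (by simp [hlm]),
          Finset.sum_singleton]
        have hcard : ({k, l, m} : Finset (Fin n)).card = 3 := by
          rw [Finset.card_insert_of_notMem (by simp [hkl, hkm]),
            Finset.card_insert_of_notMem (by simp [hlm]), Finset.card_singleton]
        rw [hcard, hGk, hGl, hGm, hA4]
        norm_num
        linarith
      · intro i hi
        simp only [Finset.mem_insert, Finset.mem_singleton, not_or] at hi
        show (1:ℚ)/(brG n α i) = 1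
        rw [hGi i hi.1 hi.2.1 hi.2.2]
        norm_num
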